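/- arXiv:1304.6883 — 2 statements merged into one kernel-verified Lean document; each statement's English description precedes it below -/
import Mathlib

section
/- Let φ : (C,S) → (D,T) be an admissible morphism of quasi-schemoids, where (C,S) is finite with underlying category a groupoid and (D,T) is a basic schemoid. Then for any σ ∈ S there exists a positive integer n_σ^φ such that for every object x of C and every morphism g ∈ φ(σ) with t(g) = φ(x), ♯(φ⁻¹(g) ∩ xσ) = n_σ^φ, where xσ = {f ∈ σ | t(f) = x}. -/
open CategoryTheory

universe v u

/-- The set of all morphisms of a category, bundled with their endpoints. -/
def Mor (C : Type u) [Category.{v} C] : Type max u v := Σ (x y : C), x ⟶ y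

namespace Mor
variable {C : Type u} [Category.{v} C]
/-- The source of a morphism. -/
def src (m : Mor C) : C := m.1
/-- The target of a morphism. -/
def tgt (m : Mor C) : C := m.2.1
end Mor

/-- The identity of `x` as an element of `Mor C`. -/
def idMor {C : Type u} [Category.{v} C] (x : C) : Mor C := ⟨x, x, 𝟙 x⟩

/-- Bundle a morphism into `Mor C`. -/
def mk3 {C : Type u} [Category.{v} C] {x y : C} (f : x ⟶ y) : Mor C := ⟨x, y, f⟩

/-- `IsComp a b m` holds iff `a` and `b` are composable (the target of `b` is the
source of `a`) and the composite `a ∘ b` equals `m`. -/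
def IsComp {C : Type u} [Category.{v} C] (a b m : Mor C) : Prop :=
  ∃ (x y z : C) (f : x ⟶ y) (g : y ⟶ z), b = mk3 f ∧ a = mk3 g ∧ m = mk3 (f ≫ g)

/-- The fiber over `m` of the concatenation map `π_{στ} : σ ×_{ob C} τ → mor C`,
where `σ` is the class of the second (outer) factor and `τ` that of the first
(inner) factor. -/
def compFiber {C : Type u} [Category.{v} C] (σ τ : Set (Mor C)) (m : Mor C) :
    Set (Mor C × Mor C) :=
  {p | p.1 ∈ σ ∧ p.2 ∈ τ ∧ IsComp p.1 p.2 m}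

/-- A quasi-schemoid: a small category together with a partition of its set of
morphisms satisfying the concatenation axiom. -/
structure QuasiSchemoid (C : Type u) [Category.{v} C] where
  part : Set (Set (Mor C))
  isPartition : Setoid.IsPartition part
  concat : ∀ σ ∈ part, ∀ τ ∈ part, ∀ μ ∈ part, ∀ f ∈ μ, ∀ g ∈ μ,
    Nonempty ((compFiber σ τ f : Set (Mor C × Mor C)) ≃ (compFiber σ τ g : Set (Mor C × Mor C)))

/-- `p^μ_{τσ} = n` : every `m ∈ μ` has exactly `n` factorizations with outer factor
in `τ` and inner factor in `σ`. -/
def structEq {C : Type u} [Category.{v} C] (τ σ μ : Set (Mor C)) (n : ℕ) : Prop :=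
  ∀ m ∈ μ, Nat.card (compFiber τ σ m) = n

/-- The set `J₀` of identities. -/
def J0 (C : Type u) [Category.{v} C] : Set (Mor C) := {m | ∃ x : C, m = idMor x}

/-- A quasi-schemoid is unital if every class meeting `J₀` is contained in `J₀`. -/
def QuasiSchemoid.IsUnital {C : Type u} [Category.{v} C] (Q : QuasiSchemoid C) : Prop :=
  ∀ σ ∈ Q.part, (σ ∩ J0 C).Nonempty → σ ⊆ J0 C

/-- A contravariant endofunctor. -/
structure ContraFunctor (C : Type u) [Category.{v} C] where
  obj : C → C
  map : ∀ {x y : C}, (x ⟶ y) → (obj y ⟶ obj x)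
  map_id : ∀ x : C, map (𝟙 x) = 𝟙 (obj x)
  map_comp : ∀ {x y z : C} (f : x ⟶ y) (g : y ⟶ z), map (f ≫ g) = map g ≫ map f

/-- The action of a contravariant functor on bundled morphisms. -/
def ContraFunctor.onMor {C : Type u} [Category.{v} C] (T : ContraFunctor C) (m : Mor C) :
    Mor C :=
  ⟨T.obj m.2.1, T.obj m.1, T.map m.2.2⟩

/-- The set `J` of endomorphisms. -/
def JEndo (C : Type u) [Category.{v} C] : Set (Mor C) := {m | m.src = m.tgt}

/-- An association schemoid. -/
structure AssnSchemoid (C : Type u) [Category.{v} C] extends QuasiSchemoid C where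
  T : ContraFunctor C
  T_invol : ∀ m : Mor C, T.onMor (T.onMor m) = m
  T_part : ∀ σ ∈ part, T.onMor '' σ ∈ part
  endo : ∀ σ ∈ part, (σ ∩ JEndo C).Nonempty → σ ⊆ JEndo C

universe v₂ u₂

/-- The action of a functor on bundled morphisms. -/
def morMap {C : Type u} {D : Type u₂} [Category.{v} C] [Category.{v₂} D] (F : C ⥤ D)
    (m : Mor C) : Mor D :=
  ⟨F.obj m.1, F.obj m.2.1, F.map m.2.2⟩

/-- A functor is a morphism of quasi-schemoids if each class of the source partition is
mapped into some class of the target partition. -/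
def IsQSMor {C : Type u} {D : Type u₂} [Category.{v} C] [Category.{v₂} D]
    (SC : Set (Set (Mor C))) (SD : Set (Set (Mor D))) (F : C ⥤ D) : Prop :=
  ∀ σ ∈ SC, ∃ τ ∈ SD, morMap F '' σ ⊆ τ

/-- A morphism of association schemoids: a morphism of quasi-schemoids commuting with the
contravariant involutions. -/
def IsASMor {C : Type u} {D : Type u₂} [Category.{v} C] [Category.{v₂} D]
    (SC : Set (Set (Mor C))) (SD : Set (Set (Mor D)))
    (TC : ContraFunctor C) (TD : ContraFunctor D) (F : C ⥤ D) : Prop :=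
  IsQSMor SC SD F ∧ ∀ m : Mor C, morMap F (TC.onMor m) = TD.onMor (morMap F m)

/-- `S₀` : the classes containing some identity. -/
def S0 {C : Type u} [Category.{v} C] (S : Set (Set (Mor C))) : Set (Set (Mor C)) :=
  {α | α ∈ S ∧ ∃ x : C, idMor x ∈ α}

/-- `_αS_β = {σ ∈ S | p^σ_{σα} = p^σ_{βσ} = 1}`. -/
def hom2 {C : Type u} [Category.{v} C] (S : Set (Set (Mor C))) (α β : Set (Mor C)) :
    Set (Set (Mor C)) :=
  {σ | σ ∈ S ∧ structEq σ α σ 1 ∧ structEq β σ σ 1}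

/-- The partition class containing a given morphism. -/
def classOf {C : Type u} [Category.{v} C] (S : Set (Set (Mor C))) (m : Mor C) :
    Set (Mor C) :=
  {m' | ∃ σ ∈ S, m ∈ σ ∧ m' ∈ σ}

/-- An admissible morphism of quasi-schemoids (Definition 6.2 of Kuribayashi–Matsuo):
a morphism of quasi-schemoids `φ` such that for every object `x`, every class `σ` and
every `g ∈ φ(σ)` with `t(g) = φ(x)`, there is `f ∈ σ` with `t(f) = x` and `φ(f) = g`. -/
def IsAdmissible {C : Type u} {D : Type u₂} [Category.{v} C] [Category.{v₂} D]
    (SC : Set (Set (Mor C))) (SD : Set (Set (Mor D))) (F : C ⥤ D) : Prop :=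
  IsQSMor SC SD F ∧
    ∀ (x : C), ∀ σ ∈ SC, ∀ g ∈ morMap F '' σ, Mor.tgt g = F.obj x →
      ∃ f ∈ σ, Mor.tgt f = x ∧ morMap F f = g

section AuxLemmas

variable {C : Type u} [Category.{v} C]

lemma mk3_eq_mk3_iff {x y x' y' : C} (f : x ⟶ y) (g : x' ⟶ y') :
    mk3 f = mk3 g ↔ ∃ (h1 : x = x') (h2 : y = y'), g = eqToHom h1.symm ≫ f ≫ eqToHom h2 := by
  constructor
  · intro h
    have h1 : x = x' := congrArg Sigma.fst h
    subst h1
    have h2 : (⟨y, f⟩ : Σ y, x ⟶ y) = ⟨y', g⟩ := eq_of_heq (Sigma.ext_iff.mp h).2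
    have h3 : y = y' := congrArg Sigma.fst h2
    subst h3
    have h4 : f = g := eq_of_heq (Sigma.ext_iff.mp h2).2
    subst h4
    exact ⟨rfl, rfl, by simp⟩
  · rintro ⟨h1, h2, h3⟩
    subst h1; subst h2
    simp only [eqToHom_refl, Category.comp_id, Category.id_comp] at h3
    subst h3; rfl

lemma mk3_eqToHom_eq_idMor {A B : C} (e : A = B) : mk3 (eqToHom e) = idMor A := by
  subst e; rfl

/-- The set of morphisms of `C` sent by `φ` to an identity. -/
def KsetS {D : Type u₂} [Category.{v₂} D] (φ : C ⥤ D) : Set (Mor C) :=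
  {k | morMap φ k ∈ J0 D}

/-- The class of the partition containing a given morphism. -/
noncomputable def clsQ (Q : QuasiSchemoid C) (b : Mor C) : Set (Mor C) :=
  (Q.isPartition.2 b).choose

lemma clsQ_mem (Q : QuasiSchemoid C) (b : Mor C) : clsQ Q b ∈ Q.part :=
  (Q.isPartition.2 b).choose_spec.1.1

lemma mem_clsQ (Q : QuasiSchemoid C) (b : Mor C) : b ∈ clsQ Q b :=
  (Q.isPartition.2 b).choose_spec.1.2

lemma clsQ_unique (Q : QuasiSchemoid C) {τ : Set (Mor C)} {b : Mor C}
    (hτ : τ ∈ Q.part) (hb : b ∈ τ) : τ = clsQ Q b :=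
  (Q.isPartition.2 b).choose_spec.2 τ ⟨hτ, hb⟩

end AuxLemmas

section LemmaA

variable {C : Type u} {D : Type u₂} [Groupoid.{v} C] [Category.{v₂} D]

lemma cardA_eq (φ : C ⥤ D) (σ : Set (Mor C)) (m : Mor C) :
    Nat.card ({f | f ∈ σ ∧ Mor.tgt f = Mor.tgt m ∧ morMap φ f = morMap φ m} : Set (Mor C)) =
      Nat.card (compFiber σ (KsetS φ) m) := by
  obtain ⟨ym, xm, mm⟩ := m
  have mem : ∀ p : Mor C × Mor C, p ∈ compFiber σ (KsetS φ) (⟨ym, xm, mm⟩ : Mor C) →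
      p.1 ∈ ({f | f ∈ σ ∧ Mor.tgt f = Mor.tgt (⟨ym, xm, mm⟩ : Mor C) ∧
        morMap φ f = morMap φ (⟨ym, xm, mm⟩ : Mor C)} : Set (Mor C)) := by
    rintro ⟨a, b⟩ ⟨ha, hK, hc⟩
    obtain ⟨x, y, z, f, g, hb', ha', hm'⟩ := hc
    dsimp only at hb' ha' hK ha ⊢
    subst hb'; subst ha'
    have hm'' : mk3 mm = mk3 (f ≫ g) := hm'
    rw [mk3_eq_mk3_iff] at hm''
    obtain ⟨e1, e2, he⟩ := hm''
    subst e1; subst e2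
    simp only [eqToHom_refl, Category.comp_id, Category.id_comp] at he
    subst he
    obtain ⟨u, hu⟩ := hK
    have hu' : mk3 (φ.map f) = mk3 (𝟙 u) := hu
    rw [mk3_eq_mk3_iff] at hu'
    obtain ⟨e1, e2, hf⟩ := hu'
    have hf' : φ.map f = eqToHom (e1.trans e2.symm) := by
      calc φ.map f = eqToHom e1 ≫ (eqToHom e1.symm ≫ φ.map f ≫ eqToHom e2) ≫ eqToHom e2.symm := by
            simp
        _ = eqToHom e1 ≫ 𝟙 u ≫ eqToHom e2.symm := by rw [← hf]
        _ = eqToHom (e1.trans e2.symm) := by simp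
    refine ⟨ha, rfl, ?_⟩
    show mk3 (φ.map g) = mk3 (φ.map (f ≫ g))
    rw [mk3_eq_mk3_iff]
    refine ⟨e2.trans e1.symm, rfl, ?_⟩
    rw [φ.map_comp, hf']
    simp
  refine (Nat.card_eq_of_bijective (fun p => ⟨p.1.1, mem p.1 p.2⟩) ⟨?_, ?_⟩).symm
  · -- injectivity
    rintro ⟨⟨a₁, b₁⟩, ha₁, hb₁, hc₁⟩ ⟨⟨a₂, b₂⟩, ha₂, hb₂, hc₂⟩ hval
    have hval' : a₁ = a₂ := congrArg Subtype.val hval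
    clear hval
    subst hval'
    suffices hbb : b₁ = b₂ by subst hbb; rfl
    obtain ⟨x, y, z, f, g, hb, ha, hm⟩ := hc₁
    obtain ⟨x', y', z', f', g', hb', ha', hm'⟩ := hc₂
    subst hb; subst hb'
    have hgg : mk3 g = mk3 g' := ha.symm.trans ha'
    rw [mk3_eq_mk3_iff] at hgg
    obtain ⟨e1, e2, he⟩ := hgg
    subst e1; subst e2
    simp only [eqToHom_refl, Category.comp_id, Category.id_comp] at he
    rw [he] at hm'
    have hmm : mk3 (f ≫ g) = mk3 (f' ≫ g) := hm.symm.trans hm'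
    rw [mk3_eq_mk3_iff] at hmm
    obtain ⟨e1, e2, he⟩ := hmm
    subst e1
    simp only [eqToHom_refl, Category.comp_id, Category.id_comp] at he
    have hff : f = f' := (cancel_mono g).mp he.symm
    rw [hff]
  · -- surjectivity
    rintro ⟨h, hσ, htgt, hφ⟩
    obtain ⟨w, xh, hm⟩ := h
    have hx : xh = xm := htgt
    subst hx
    have hφ' : mk3 (φ.map hm) = mk3 (φ.map mm) := hφ
    rw [mk3_eq_mk3_iff] at hφ'
    obtain ⟨e1, e2, he⟩ := hφ'
    refine ⟨⟨⟨⟨w, xh, hm⟩, mk3 (mm ≫ Groupoid.inv hm)⟩, hσ, ?_, ?_⟩, rfl⟩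
    · show morMap φ (mk3 (mm ≫ Groupoid.inv hm)) ∈ J0 D
      refine ⟨φ.obj ym, ?_⟩
      show mk3 (φ.map (mm ≫ Groupoid.inv hm)) = idMor (φ.obj ym)
      have hmap : φ.map (mm ≫ Groupoid.inv hm) = eqToHom e1.symm := by
        rw [φ.map_comp, he, Groupoid.inv_eq_inv, φ.map_inv]
        simp
      rw [hmap, mk3_eqToHom_eq_idMor]
    · refine ⟨ym, w, xh, mm ≫ Groupoid.inv hm, hm, rfl, rfl, ?_⟩
      show mk3 mm = mk3 ((mm ≫ Groupoid.inv hm) ≫ hm)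
      congr 1
      simp [Groupoid.inv_eq_inv]

end LemmaA

section LemmaB

variable {C : Type u} [Category.{v} C]

lemma cardB_le [Finite (Mor C)] (Q : QuasiSchemoid C) {σ : Set (Mor C)} (hσ : σ ∈ Q.part)
    (K : Set (Mor C)) (hK : ∀ τ ∈ Q.part, (τ ∩ K).Nonempty → τ ⊆ K)
    {m m' : Mor C} (hm : m ∈ σ) (hm' : m' ∈ σ) :
    Nat.card (compFiber σ K m) ≤ Nat.card (compFiber σ K m') := by
  classical
  let e : ∀ τ, τ ∈ Q.part →
      ((compFiber σ τ m : Set (Mor C × Mor C)) ≃ (compFiber σ τ m' : Set (Mor C × Mor C))) :=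
    fun τ hτ => (Q.concat σ hσ τ hτ σ hσ m hm m' hm').some
  have hmem : ∀ p : Mor C × Mor C, p ∈ compFiber σ K m →
      p ∈ compFiber σ (clsQ Q p.2) m :=
    fun p hp => ⟨hp.1, mem_clsQ Q p.2, hp.2.2⟩
  have hout : ∀ (p : Mor C × Mor C) (hp : p ∈ compFiber σ K m),
      ((e (clsQ Q p.2) (clsQ_mem Q p.2)) ⟨p, hmem p hp⟩ : Mor C × Mor C) ∈ compFiber σ K m' := by
    intro p hp
    set q := (e (clsQ Q p.2) (clsQ_mem Q p.2)) ⟨p, hmem p hp⟩ with hq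
    have hq2 := q.2
    exact ⟨hq2.1, hK _ (clsQ_mem Q p.2) ⟨p.2, mem_clsQ Q p.2, hp.2.1⟩ hq2.2.1, hq2.2.2⟩
  refine Nat.card_le_card_of_injective
    (fun p => ⟨((e (clsQ Q p.1.2) (clsQ_mem Q p.1.2)) ⟨p.1, hmem p.1 p.2⟩ : Mor C × Mor C),
      hout p.1 p.2⟩) ?_
  -- injectivity
  have key : ∀ (τ τ' : Set (Mor C)) (hττ : τ = τ') (hτ : τ ∈ Q.part) (hτ' : τ' ∈ Q.part)
      (x : (compFiber σ τ m : Set (Mor C × Mor C)))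
      (x' : (compFiber σ τ' m : Set (Mor C × Mor C))),
      (e τ hτ x : Mor C × Mor C) = (e τ' hτ' x' : Mor C × Mor C) → (x : Mor C × Mor C) = x' := by
    intro τ τ' hττ hτ hτ' x x' hxx
    subst hττ
    have : e τ hτ x = e τ hτ' x' := Subtype.ext hxx
    have : x = x' := (e τ hτ).injective this
    exact congrArg Subtype.val this
  rintro ⟨p₁, hp₁⟩ ⟨p₂, hp₂⟩ hval
  have hval' : ((e (clsQ Q p₁.2) (clsQ_mem Q p₁.2)) ⟨p₁, hmem p₁ hp₁⟩ : Mor C × Mor C)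
      = ((e (clsQ Q p₂.2) (clsQ_mem Q p₂.2)) ⟨p₂, hmem p₂ hp₂⟩ : Mor C × Mor C) :=
    congrArg Subtype.val hval
  have hcls : clsQ Q p₁.2 = clsQ Q p₂.2 := by
    have h1 : ((e (clsQ Q p₁.2) (clsQ_mem Q p₁.2)) ⟨p₁, hmem p₁ hp₁⟩ : Mor C × Mor C).2
        ∈ clsQ Q p₁.2 :=
      ((e (clsQ Q p₁.2) (clsQ_mem Q p₁.2)) ⟨p₁, hmem p₁ hp₁⟩).2.2.1
    have h2 : ((e (clsQ Q p₂.2) (clsQ_mem Q p₂.2)) ⟨p₂, hmem p₂ hp₂⟩ : Mor C × Mor C).2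
        ∈ clsQ Q p₂.2 :=
      ((e (clsQ Q p₂.2) (clsQ_mem Q p₂.2)) ⟨p₂, hmem p₂ hp₂⟩).2.2.1
    rw [hval'] at h1
    exact (clsQ_unique Q (clsQ_mem Q p₁.2) h1).trans (clsQ_unique Q (clsQ_mem Q p₂.2) h2).symm
  have := key _ _ hcls (clsQ_mem Q p₁.2) (clsQ_mem Q p₂.2) ⟨p₁, hmem p₁ hp₁⟩ ⟨p₂, hmem p₂ hp₂⟩ hval'
  exact Subtype.ext this

end LemmaB

/-- Lemma 6.5 of Kuribayashi–Matsuo: for an admissible morphism `φ : (C,S) → (D,T)`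
from a finite quasi-schemoid whose underlying category is a groupoid to a basic
schemoid, every `σ ∈ S` has a positive integer `n_σ^φ` such that
`♯(φ⁻¹(g) ∩ xσ) = n_σ^φ` for every object `x` and every `g ∈ φ(σ)` with
`t(g) = φ(x)`. -/
theorem isAdmissible_fiber_count
    {C : Type u} {D : Type u} [Groupoid.{v} C] [Groupoid.{v} D] [Finite (Mor C)]
    (QC : QuasiSchemoid C) (QD : QuasiSchemoid D) (hQD : QD.IsUnital)
    (φ : C ⥤ D) (hadm : IsAdmissible QC.part QD.part φ) :
    ∀ σ ∈ QC.part, ∃ n : ℕ, 0 < n ∧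
      ∀ (x : C), ∀ g ∈ morMap φ '' σ, Mor.tgt g = φ.obj x →
        Nat.card ({f | f ∈ σ ∧ Mor.tgt f = x ∧ morMap φ f = g} : Set (Mor C)) = n := by
  intro σ hσ
  have hσne : σ.Nonempty := by
    rw [Set.nonempty_iff_ne_empty]
    rintro rfl
    exact QC.isPartition.1 hσ
  obtain ⟨m₀, hm₀⟩ := hσne
  have hK : ∀ τ ∈ QC.part, (τ ∩ KsetS φ).Nonempty → τ ⊆ KsetS φ := by
    rintro τ hτ ⟨k, hkτ, hkK⟩ k' hk'
    obtain ⟨τ', hτ', hsub⟩ := hadm.1 τ hτ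
    have hkτ' : morMap φ k ∈ τ' := hsub ⟨k, hkτ, rfl⟩
    exact hQD τ' hτ' ⟨morMap φ k, hkτ', hkK⟩ (hsub ⟨k', hk', rfl⟩)
  have cardB_const : ∀ f ∈ σ,
      Nat.card (compFiber σ (KsetS φ) f) = Nat.card (compFiber σ (KsetS φ) m₀) :=
    fun f hf => le_antisymm (cardB_le QC hσ _ hK hf hm₀) (cardB_le QC hσ _ hK hm₀ hf)
  refine ⟨Nat.card
    ({f | f ∈ σ ∧ Mor.tgt f = Mor.tgt m₀ ∧ morMap φ f = morMap φ m₀} : Set (Mor C)), ?_, ?_⟩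
  · haveI : Nonempty
        ({f | f ∈ σ ∧ Mor.tgt f = Mor.tgt m₀ ∧ morMap φ f = morMap φ m₀} : Set (Mor C)) :=
      ⟨⟨m₀, hm₀, rfl, rfl⟩⟩
    exact Nat.card_pos
  · intro x g hg htg
    obtain ⟨f, hfσ, hft, hfφ⟩ := hadm.2 x σ hσ g hg htg
    have hset : ({h | h ∈ σ ∧ Mor.tgt h = x ∧ morMap φ h = g} : Set (Mor C))
        = {h | h ∈ σ ∧ Mor.tgt h = Mor.tgt f ∧ morMap φ h = morMap φ f} := by
      rw [hft, hfφ]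
    rw [hset, cardA_eq φ σ f, cardB_const f hfσ, ← cardA_eq φ σ m₀]
end

section
/- Let D₊ → E →(q) C be a linear extension with (C,S) a quasi-schemoid, where for every morphism f of C the maps f_* and f^* are invertible and D_{1_{s(f)}} ≅ D_{1_{s(g)}} for all σ ∈ S and f, g ∈ σ, and give E the quasi-schemoid structure S̃ = {q⁻¹(σ)}_{σ∈S}. Then the proper morphism q : (E,S̃) → (C,S) is admissible. Moreover, if (C,S) is basic, then for each σ̃ = q⁻¹(σ) ∈ S̃ the constant n_{σ̃}^q satisfies n_{σ̃}^q = ♯D_g for any g ∈ σ. -/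
open CategoryTheory

universe v u

universe v₂ u₂

/-- The category of factorizations `F(C)` : objects are the morphisms of `C`, and a
morphism `f → g` is a pair `(α,β)` with `α ∘ f ∘ β = g`. -/
def FactCat (C : Type u) [Category.{v} C] : Type max u v := Mor C

/-- Reinterpret an element of `Mor C` as an object of `F(C)`. -/
def toFactCat {C : Type u} [Category.{v} C] (m : Mor C) : FactCat C := m

/-- Reinterpret an object of `F(C)` as an element of `Mor C`. -/
def FactCat.toMor {C : Type u} [Category.{v} C] (m : FactCat C) : Mor C := m

instance FactCat.category (C : Type u) [Category.{v} C] : Category (FactCat C) where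
  Hom f g :=
    {p : (g.toMor.1 ⟶ f.toMor.1) × (f.toMor.2.1 ⟶ g.toMor.2.1) //
      p.1 ≫ f.toMor.2.2 ≫ p.2 = g.toMor.2.2}
  id f := ⟨(𝟙 _, 𝟙 _), by simp⟩
  comp {f g h} p q := ⟨(q.1.1 ≫ p.1.1, p.1.2 ≫ q.1.2), by
    calc (q.1.1 ≫ p.1.1) ≫ f.toMor.2.2 ≫ (p.1.2 ≫ q.1.2)
        = q.1.1 ≫ (p.1.1 ≫ f.toMor.2.2 ≫ p.1.2) ≫ q.1.2 := by simp
      _ = q.1.1 ≫ g.toMor.2.2 ≫ q.1.2 := by rw [p.2]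
      _ = h.toMor.2.2 := q.2⟩
  id_comp p := by apply Subtype.ext; simp
  comp_id p := by apply Subtype.ext; simp
  assoc p q r := by apply Subtype.ext; simp

/-- The abelian group `D_m` associated by a natural system `N : F(C) → Ab` to a
morphism `m`. -/
def elN {C : Type u} [Category.{v} C] (N : FactCat C ⥤ AddCommGrpCat.{w}) (m : Mor C) :
    Type w :=
  N.obj (toFactCat m)

noncomputable instance elN.addCommGroup {C : Type u} [Category.{v} C]
    (N : FactCat C ⥤ AddCommGrpCat.{w}) (m : Mor C) : AddCommGroup (elN N m) :=
  inferInstanceAs (AddCommGroup (N.obj (toFactCat m)))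

/-- The morphism `(f, 1) : g → g ≫ f` of `F(C)` inducing `f_*`. -/
def factPushHom {C : Type u} [Category.{v} C] {x y z : C} (g : x ⟶ y) (f : y ⟶ z) :
    toFactCat (mk3 g) ⟶ toFactCat (mk3 (g ≫ f)) :=
  ⟨(𝟙 x, f), by simp [toFactCat, FactCat.toMor, mk3]⟩

/-- The morphism `(1, g) : f → g ≫ f` of `F(C)` inducing `g^*`. -/
def factPullHom {C : Type u} [Category.{v} C] {x y z : C} (g : x ⟶ y) (f : y ⟶ z) :
    toFactCat (mk3 f) ⟶ toFactCat (mk3 (g ≫ f)) :=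
  ⟨(g, 𝟙 z), by simp [toFactCat, FactCat.toMor, mk3]⟩

/-- `f_* : D_g → D_{f∘g}` (post-composition by `f`). -/
def fpush {C : Type u} [Category.{v} C] (N : FactCat C ⥤ AddCommGrpCat.{w}) {x y z : C}
    (g : x ⟶ y) (f : y ⟶ z) : elN N (mk3 g) → elN N (mk3 (g ≫ f)) :=
  fun a => N.map (factPushHom g f) a

/-- `g^* : D_f → D_{f∘g}` (pre-composition by `g`). -/
def fpull {C : Type u} [Category.{v} C] (N : FactCat C ⥤ AddCommGrpCat.{w}) {x y z : C}
    (g : x ⟶ y) (f : y ⟶ z) : elN N (mk3 f) → elN N (mk3 (g ≫ f)) :=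
  fun a => N.map (factPullHom g f) a

/-- Transport in the coefficients of a natural system along an equality of morphisms. -/
def elCast {C : Type u} [Category.{v} C] (N : FactCat C ⥤ AddCommGrpCat.{w}) {x y : C}
    {f g : x ⟶ y} (h : f = g) (a : elN N (mk3 f)) : elN N (mk3 g) := by
  subst h; exact a

/-- A linear extension `D₊ → E → C` of a small category `C` by a natural system
`N : F(C) → Ab` (Definition 5.1 of Kuribayashi–Matsuo, after Baues–Wirsching):
`E` has the same objects as `C`, `q` is a full functor which is the identity on
objects, each `D_f` acts transitively and effectively on `q⁻¹(f)`, and the linear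
distributivity law holds. -/
structure LinExt (C : Type u) [Category.{v} C]
    (N : FactCat C ⥤ AddCommGrpCat.{w}) where
  hom : C → C → Type w
  id' : ∀ x : C, hom x x
  comp' : ∀ {x y z : C}, hom x y → hom y z → hom x z
  id_comp' : ∀ {x y : C} (e : hom x y), comp' (id' x) e = e
  comp_id' : ∀ {x y : C} (e : hom x y), comp' e (id' y) = e
  assoc' : ∀ {w x y z : C} (a : hom w x) (b : hom x y) (c : hom y z),
    comp' (comp' a b) c = comp' a (comp' b c)
  /-- the projection `q`, identity on objects -/
  q : ∀ {x y : C}, hom x y → (x ⟶ y)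
  q_id : ∀ x : C, q (id' x) = 𝟙 x
  q_comp : ∀ {x y z : C} (e : hom x y) (e' : hom y z), q (comp' e e') = q e ≫ q e'
  /-- `q` is full -/
  q_surj : ∀ {x y : C} (f : x ⟶ y), ∃ e : hom x y, q e = f
  /-- the action of `D_f` on `q⁻¹(f)`, written `e + a` -/
  act : ∀ {x y : C} (e : hom x y), elN N (mk3 (q e)) → hom x y
  act_q : ∀ {x y : C} (e : hom x y) (a : elN N (mk3 (q e))), q (act e a) = q e
  act_zero : ∀ {x y : C} (e : hom x y), act e 0 = e
  act_add : ∀ {x y : C} (e : hom x y) (a b : elN N (mk3 (q e))),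
    act (act e a) (elCast N (act_q e a).symm b) = act e (a + b)
  /-- transitivity of the action on fibers of `q` -/
  act_trans : ∀ {x y : C} (e e' : hom x y) (h : q e = q e'),
    ∃ a : elN N (mk3 (q e)), act e a = e'
  /-- effectiveness (freeness) of the action -/
  act_free : ∀ {x y : C} (e : hom x y) (a : elN N (mk3 (q e))), act e a = e → a = 0
  /-- the linear distributivity law `(f₀+α)(g₀+β) = f₀g₀ + f_*β + g^*α` -/
  distrib : ∀ {x y z : C} (g₀ : hom x y) (f₀ : hom y z)
    (β : elN N (mk3 (q g₀))) (α : elN N (mk3 (q f₀))),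
    comp' (act g₀ β) (act f₀ α) =
      act (comp' g₀ f₀)
        (elCast N (q_comp g₀ f₀).symm
          (fpush N (q g₀) (q f₀) β + fpull N (q g₀) (q f₀) α))

/-- The total category `E` of a linear extension. -/
def LinExt.Carrier {C : Type u} [Category.{v} C]
    {N : FactCat C ⥤ AddCommGrpCat.{w}} (_ : LinExt C N) : Type u := C

instance LinExt.category {C : Type u} [Category.{v} C]
    {N : FactCat C ⥤ AddCommGrpCat.{w}} (L : LinExt C N) : Category L.Carrier where
  Hom x y := L.hom x y
  id x := L.id' x
  comp e e' := L.comp' e e'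
  id_comp e := L.id_comp' e
  comp_id e := L.comp_id' e
  assoc a b c := L.assoc' a b c

/-- The projection functor `q : E ⥤ C` of a linear extension. -/
def LinExt.qFunctor {C : Type u} [Category.{v} C]
    {N : FactCat C ⥤ AddCommGrpCat.{w}} (L : LinExt C N) : L.Carrier ⥤ C where
  obj x := x
  map e := L.q e
  map_id x := L.q_id x
  map_comp e e' := L.q_comp e e'

/-- The partition `S̃ = {q⁻¹(σ)}_{σ ∈ S}` of `mor E`. -/
def preimagePart {C : Type u} [Category.{v} C] {N : FactCat C ⥤ AddCommGrpCat.{w}}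
    (L : LinExt C N) (S : Set (Set (Mor C))) : Set (Set (Mor L.Carrier)) :=
  {s | ∃ σ ∈ S, s = morMap L.qFunctor ⁻¹' σ}

/-- A proper morphism of quasi-schemoids: a morphism which is injective on the
partitions. -/
def IsProperQSMor {C : Type u} {D : Type u₂} [Category.{v} C] [Category.{v₂} D]
    (SC : Set (Set (Mor C))) (SD : Set (Set (Mor D))) (F : C ⥤ D) : Prop :=
  IsQSMor SC SD F ∧
    ∀ σ₁ ∈ SC, ∀ σ₂ ∈ SC, ∀ τ ∈ SD,
      morMap F '' σ₁ ⊆ τ → morMap F '' σ₂ ⊆ τ → σ₁ = σ₂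

lemma elCast_eq_zero_iff {C : Type u} [Category.{v} C] (N : FactCat C ⥤ AddCommGrpCat.{w})
    {x y : C} {f g : x ⟶ y} (h : f = g) (a : elN N (mk3 f)) :
    elCast N h a = 0 ↔ a = 0 := by subst h; exact Iff.rfl

/-- The cardinality of a morphism class `elN N m` equals that of `elN N (idMor m.1)`,
given invertibility of push/pull maps. -/
lemma card_elN_eq_card_id {C : Type u} [Category.{v} C] (N : FactCat C ⥤ AddCommGrpCat.{w})
    (hinv : ∀ {x y z : C} (g : x ⟶ y) (f : y ⟶ z),
      Function.Bijective (fpush N g f) ∧ Function.Bijective (fpull N g f))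
    (m : Mor C) : Nat.card (elN N m) = Nat.card (elN N (idMor m.1)) := by
  obtain ⟨x, y, f⟩ := m
  have e1 : elN N (mk3 f) ≃ elN N (mk3 (𝟙 x ≫ f)) :=
    Equiv.ofBijective _ (hinv (𝟙 x) f).2
  have e2 : elN N (mk3 (𝟙 x)) ≃ elN N (mk3 (𝟙 x ≫ f)) :=
    Equiv.ofBijective _ (hinv (𝟙 x) f).1
  exact Nat.card_congr (e1.trans e2.symm)

/-- The fiber of `q` over `f` has the cardinality of `elN N (mk3 f)`. -/
lemma card_fiber_eq {C : Type u} [Category.{v} C] {N : FactCat C ⥤ AddCommGrpCat.{w}}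
    (L : LinExt C N) {x y : C} (f : x ⟶ y) :
    Nat.card {e : L.hom x y // L.q e = f} = Nat.card (elN N (mk3 f)) := by
  obtain ⟨e₀, rfl⟩ := L.q_surj f
  refine Nat.card_congr (Equiv.ofBijective
    (fun a : elN N (mk3 (L.q e₀)) => (⟨L.act e₀ a, L.act_q e₀ a⟩ :
      {e : L.hom x y // L.q e = L.q e₀})) ⟨?_, ?_⟩).symm
  · intro a b hab
    have hab' : L.act e₀ a = L.act e₀ b := congrArg Subtype.val hab
    have h1 := L.act_add e₀ a (b - a)
    have h2 : a + (b - a) = b := by abel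
    rw [h2, ← hab'] at h1
    have h3 := L.act_free _ _ h1
    have h4 : b - a = 0 := (elCast_eq_zero_iff N _ _).mp h3
    exact (sub_eq_zero.mp h4).symm
  · rintro ⟨e, he⟩
    obtain ⟨a, ha⟩ := L.act_trans e₀ e he.symm
    exact ⟨a, Subtype.ext ha⟩

/-- Proposition 6.10 of Kuribayashi–Matsuo: for a schemoid extension
`D₊ → (E,S̃) → (C,S)` with `S̃ = {q⁻¹(σ)}`, the proper morphism `q` is admissible;
moreover, if `(C,S)` is basic, then for each class `σ̃ = q⁻¹(σ)` the constant
`n_{σ̃}^q` equals `♯D_g` for any `g ∈ σ`. -/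
theorem linExt_qFunctor_admissible
    {C : Type u} [Category.{v} C] (Q : QuasiSchemoid C)
    (N : FactCat C ⥤ AddCommGrpCat.{w}) (L : LinExt C N)
    (hinv : ∀ {x y z : C} (g : x ⟶ y) (f : y ⟶ z),
      Function.Bijective (fpush N g f) ∧ Function.Bijective (fpull N g f))
    (hiso : ∀ σ ∈ Q.part, ∀ f ∈ σ, ∀ g ∈ σ,
      Nonempty (elN N (idMor (Mor.src f)) ≃+ elN N (idMor (Mor.src g)))) :
    IsAdmissible (preimagePart L Q.part) Q.part L.qFunctor ∧
    ((Q.IsUnital ∧ ∀ m : Mor C, ∃ g' : m.2.1 ⟶ m.1,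
        m.2.2 ≫ g' = 𝟙 m.1 ∧ g' ≫ m.2.2 = 𝟙 m.2.1) →
      ∀ σ ∈ Q.part, ∀ g ∈ σ, ∀ (x : L.Carrier), ∀ h ∈ σ, Mor.tgt h = L.qFunctor.obj x →
        Nat.card ({f | f ∈ morMap L.qFunctor ⁻¹' σ ∧ Mor.tgt f = x ∧
            morMap L.qFunctor f = h} : Set (Mor L.Carrier)) =
          Nat.card (elN N g)) := by
  constructor
  · constructor
    · rintro s ⟨σ, hσ, rfl⟩
      exact ⟨σ, hσ, by rintro _ ⟨f, hf, rfl⟩; exact hf⟩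
    · rintro x s ⟨σ, hσ, rfl⟩ g hg htgt
      obtain ⟨f0, hf0, rfl⟩ := hg
      exact ⟨f0, hf0, htgt, rfl⟩
  · rintro - σ hσ g hg x ⟨hx, hy, hg'⟩ hh htgt
    have hyx : hy = x := htgt
    subst hyx
    have step1 : Nat.card ({f | f ∈ morMap L.qFunctor ⁻¹' σ ∧ Mor.tgt f = hy ∧
        morMap L.qFunctor f = ⟨hx, hy, hg'⟩} : Set (Mor L.Carrier)) =
        Nat.card {e : L.hom hx hy // L.q e = hg'} := by
      refine (Nat.card_congr (Equiv.ofBijective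
        (fun e : {e : L.hom hx hy // L.q e = hg'} =>
          (⟨⟨hx, hy, e.1⟩, ?_, rfl, ?_⟩ : ({f | f ∈ morMap L.qFunctor ⁻¹' σ ∧
            Mor.tgt f = hy ∧ morMap L.qFunctor f = ⟨hx, hy, hg'⟩} :
            Set (Mor L.Carrier)))) ⟨?_, ?_⟩)).symm
      · show (⟨hx, hy, L.q e.1⟩ : Mor C) ∈ σ
        rw [e.2]; exact hh
      · show (⟨hx, hy, L.q e.1⟩ : Mor C) = ⟨hx, hy, hg'⟩
        rw [e.2]
      · intro e1 e2 h12
        have h12' : (⟨hx, hy, e1.1⟩ : Mor L.Carrier) = ⟨hx, hy, e2.1⟩ :=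
          congrArg Subtype.val h12
        obtain ⟨-, h2⟩ := Sigma.mk.inj_iff.mp h12'
        obtain ⟨-, h3⟩ := Sigma.mk.inj_iff.mp (eq_of_heq h2)
        exact Subtype.ext (eq_of_heq h3)
      · rintro ⟨⟨a, b, e⟩, hmem, htf, hq⟩
        have hq' : (⟨a, b, L.q e⟩ : Mor C) = ⟨hx, hy, hg'⟩ := hq
        obtain ⟨rfl, h2⟩ := Sigma.mk.inj_iff.mp hq'
        obtain ⟨rfl, h3⟩ := Sigma.mk.inj_iff.mp (eq_of_heq h2)
        exact ⟨⟨e, eq_of_heq h3⟩, rfl⟩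
    rw [step1, card_fiber_eq L hg']
    have stepA : Nat.card (elN N (mk3 hg')) = Nat.card (elN N (idMor hx)) :=
      card_elN_eq_card_id N @hinv ⟨hx, hy, hg'⟩
    have stepB : Nat.card (elN N g) = Nat.card (elN N (idMor g.1)) :=
      card_elN_eq_card_id N @hinv g
    obtain ⟨φ⟩ := hiso σ hσ ⟨hx, hy, hg'⟩ hh g hg
    rw [stepA, stepB]
    exact Nat.card_congr φ.toEquiv
end
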